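/- Let $(\Sigma_2, \sigma)$ be the full shift on two symbols. For every $n \ge 2$ and all integers $0 = k_1 < k_2 < \dots < k_n$, there exists $z \in \Sigma_2$ such that the finite words $z[k_i, k_i + n - 2]$ (the blocks of $z$ of length $n-1$ starting at position $k_i$), for $i = 1, \dots, n$, are pairwise distinct. -/

import Mathlib

open Finset

/-- Extend a function on `Fin N` to `ℕ` by zero. -/
def extFun (N : ℕ) (f : Fin N → Fin 2) (m : ℕ) : Fin 2 :=
  if h : m < N then f ⟨m, h⟩ else 0

/-- The set of functions whose windows at `k i` and `k j` (length `n-1`) coincide. -/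
def badSet (N n : ℕ) (k : Fin n → ℕ) (i j : Fin n) : Finset (Fin N → Fin 2) :=
  Finset.univ.filter (fun f => ∀ t : Fin (n - 1),
    extFun N f (k i + t) = extFun N f (k j + t))

lemma extFun_apply (N : ℕ) (f : Fin N → Fin 2) (m : Fin N) :
    extFun N f (m : ℕ) = f m := by
  simp [extFun, m.isLt]

/-- A bad function is determined by its values outside `[k j, k j + n - 2]`. -/
lemma det_lemma (N n : ℕ) (k : Fin n → ℕ) (i j : Fin n) (hij : k i < k j)
    (f f' : Fin N → Fin 2) (hf : f ∈ badSet N n k i j) (hf' : f' ∈ badSet N n k i j)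
    (hagree : ∀ m : Fin N, ¬ (k j ≤ (m : ℕ) ∧ (m : ℕ) - k j < n - 1) → f m = f' m) :
    f = f' := by
  rw [badSet, Finset.mem_filter] at hf hf'
  have main : ∀ M : ℕ, ∀ m : Fin N, (m : ℕ) ≤ M → f m = f' m := by
    intro M
    induction M with
    | zero =>
      intro m hm
      apply hagree
      omega
    | succ M ih =>
      intro m hm
      by_cases hD : k j ≤ (m : ℕ) ∧ (m : ℕ) - k j < n - 1
      · set t : Fin (n - 1) := ⟨(m : ℕ) - k j, hD.2⟩ with ht
        have hmval : (m : ℕ) = k j + (t : ℕ) := by simp [ht]; omega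
        have hiN : k i + (t : ℕ) < N := by have := m.isLt; omega
        have step : f m = f' m := by
          have e1 : f m = extFun N f (k j + (t : ℕ)) := by
            rw [← hmval, extFun_apply]
          have e2 : f' m = extFun N f' (k j + (t : ℕ)) := by
            rw [← hmval, extFun_apply]
          have e3 : extFun N f (k i + (t : ℕ)) = f ⟨k i + (t : ℕ), hiN⟩ :=
            extFun_apply N f ⟨k i + (t : ℕ), hiN⟩
          have e4 : extFun N f' (k i + (t : ℕ)) = f' ⟨k i + (t : ℕ), hiN⟩ :=
            extFun_apply N f' ⟨k i + (t : ℕ), hiN⟩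
          have e5 : f ⟨k i + (t : ℕ), hiN⟩ = f' ⟨k i + (t : ℕ), hiN⟩ := by
            apply ih
            simp only
            omega
          rw [e1, ← hf.2 t, e3, e5, ← e4, hf'.2 t, ← e2]
        exact step
      · exact hagree m hD
  funext m
  exact main (m : ℕ) m le_rfl

lemma badSet_card (N n : ℕ) (k : Fin n → ℕ) (i j : Fin n) (hij : k i < k j)
    (hb : ∀ t : Fin (n - 1), k j + (t : ℕ) < N) :
    (badSet N n k i j).card * 2 ^ (n - 1) ≤ 2 ^ N := by
  classical
  have hcard2 : ((Finset.univ : Finset (Fin (n - 1) → Fin 2))).card = 2 ^ (n - 1) := by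
    simp
  have hcardN : ((Finset.univ : Finset (Fin N → Fin 2))).card = 2 ^ N := by
    simp
  rw [← hcard2, ← Finset.card_product, ← hcardN]
  apply Finset.card_le_card_of_injOn
    (fun p => fun m : Fin N =>
      if h : k j ≤ (m : ℕ) ∧ (m : ℕ) - k j < n - 1 then p.2 ⟨(m : ℕ) - k j, h.2⟩ else p.1 m)
  · intro p _
    exact Finset.mem_univ _
  · intro p hp q hq hpq
    rw [Finset.coe_product] at hp hq
    obtain ⟨hp1, _⟩ := hp
    obtain ⟨hq1, _⟩ := hq
    simp only [Finset.mem_coe] at hp1 hq1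
    have h2 : p.2 = q.2 := by
      funext t
      have hm : k j + (t : ℕ) < N := hb t
      have := congrFun hpq ⟨k j + (t : ℕ), hm⟩
      simp only at this
      have hcond : k j ≤ ((⟨k j + (t : ℕ), hm⟩ : Fin N) : ℕ) ∧
          ((⟨k j + (t : ℕ), hm⟩ : Fin N) : ℕ) - k j < n - 1 := by
        simp only
        constructor
        · omega
        · have := t.isLt; omega
      rw [dif_pos hcond, dif_pos hcond] at this
      have hteq : (⟨((⟨k j + (t : ℕ), hm⟩ : Fin N) : ℕ) - k j, hcond.2⟩ : Fin (n - 1)) = t := by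
        apply Fin.ext
        simp only
        omega
      rwa [hteq] at this
    have h1 : p.1 = q.1 := by
      apply det_lemma N n k i j hij _ _ hp1 hq1
      intro m hm
      have := congrFun hpq m
      simp only at this
      rwa [dif_neg hm, dif_neg hm] at this
    exact Prod.ext h1 h2

lemma two_mul_le_pow (n : ℕ) (h : 1 ≤ n) : 2 * n ≤ 2 ^ n := by
  induction n with
  | zero => omega
  | succ m ih =>
    rcases Nat.eq_or_lt_of_le h with h1 | h1
    · simp [← h1]
    · have hm : 1 ≤ m := by omega
      have := ih hm
      have h2 : 2 ≤ 2 ^ m := by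
        calc 2 = 2 * 1 := by ring
        _ ≤ 2 * m := by omega
        _ ≤ 2 ^ m := this
      have : 2 * (m + 1) = 2 * m + 2 := by ring
      rw [this, pow_succ]
      omega

lemma mul_pred_lt_pow (n : ℕ) : n * (n - 1) < 2 ^ n := by
  induction n with
  | zero => norm_num
  | succ m ih =>
    rcases Nat.eq_zero_or_pos m with h | h
    · subst h; norm_num
    · have h1 : (m + 1) * (m + 1 - 1) = m * (m - 1) + 2 * m := by
        cases m with
        | zero => omega
        | succ p => simp only [Nat.add_sub_cancel]; ring
      have h2 := two_mul_le_pow m h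
      rw [pow_succ]
      calc (m + 1) * (m + 1 - 1) = m * (m - 1) + 2 * m := h1
      _ < 2 ^ m + 2 ^ m := Nat.add_lt_add_of_lt_of_le ih h2
      _ = 2 ^ m * 2 := by ring


lemma sum_fin_lt_pow (n : ℕ) (hn : 2 ≤ n) : (∑ j : Fin n, (j : ℕ)) < 2 ^ (n - 1) := by
  have h1 : (∑ j : Fin n, (j : ℕ)) * 2 = n * (n - 1) := by
    rw [show (∑ j : Fin n, (j : ℕ)) = ∑ j ∈ Finset.range n, j from
      Fin.sum_univ_eq_sum_range (fun x => x) n]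
    exact Finset.sum_range_id_mul_two n
  have h2 : n * (n - 1) < 2 ^ n := mul_pred_lt_pow n
  have h3 : 2 ^ n = 2 ^ (n - 1) * 2 := by
    rw [← pow_succ]
    congr 1
    omega
  have h4 : (∑ j : Fin n, (j : ℕ)) * 2 < 2 ^ (n - 1) * 2 := by omega
  exact Nat.lt_of_mul_lt_mul_right h4

theorem stmt_9 (n : ℕ) (hn : 2 ≤ n) (k : Fin n → ℕ)
    (hk : StrictMono k) (hk0 : k ⟨0, by omega⟩ = 0) :
    ∃ z : ℕ → Fin 2, ∀ i j : Fin n, i ≠ j →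
      (fun t : Fin (n - 1) => z (k i + t)) ≠ (fun t : Fin (n - 1) => z (k j + t)) := by
  classical
  set last : Fin n := ⟨n - 1, by omega⟩ with hlast
  set N : ℕ := k last + n with hN
  have hb : ∀ (i : Fin n) (t : Fin (n - 1)), k i + (t : ℕ) < N := by
    intro i t
    have h1 : k i ≤ k last := by
      apply hk.monotone
      rw [Fin.le_def]
      have := i.isLt
      simp only [hlast]
      omega
    have h2 : (t : ℕ) < n - 1 := t.isLt
    omega
  have hex : ∃ f : Fin N → Fin 2, ∀ i j : Fin n, i < j →
      ∃ t : Fin (n - 1), extFun N f (k i + t) ≠ extFun N f (k j + t) := by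
    by_contra hcon
    push_neg at hcon
    have hcover : (Finset.univ : Finset (Fin N → Fin 2)) ⊆
        (Finset.univ.sigma (fun j : Fin n => Finset.Iio j)).biUnion
          (fun p => badSet N n k p.2 p.1) := by
      intro f _
      obtain ⟨i, j, hij, hall⟩ := hcon f
      refine Finset.mem_biUnion.mpr ⟨⟨j, i⟩, ?_, ?_⟩
      · rw [Finset.mem_sigma]
        exact ⟨Finset.mem_univ _, Finset.mem_Iio.mpr hij⟩
      · rw [badSet, Finset.mem_filter]
        exact ⟨Finset.mem_univ _, hall⟩
    have hcardN : ((Finset.univ : Finset (Fin N → Fin 2))).card = 2 ^ N := by simp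
    have hle1 := Finset.card_le_card hcover
    have hle2 := Finset.card_biUnion_le (s := Finset.univ.sigma (fun j : Fin n => Finset.Iio j))
      (t := fun p => badSet N n k p.2 p.1)
    have hNsplit : 2 ^ N = 2 ^ (N - (n - 1)) * 2 ^ (n - 1) := by
      rw [← pow_add]
      congr 1
      omega
    have hbadle : ∀ p : (_ : Fin n) × Fin n, p ∈ Finset.univ.sigma (fun j : Fin n => Finset.Iio j) →
        (badSet N n k p.2 p.1).card ≤ 2 ^ (N - (n - 1)) := by
      intro p hp
      rw [Finset.mem_sigma, Finset.mem_Iio] at hp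
      have hkij : k p.2 < k p.1 := hk hp.2
      have := badSet_card N n k p.2 p.1 hkij (hb p.1)
      rw [hNsplit] at this
      have h2pos : 0 < 2 ^ (n - 1) := Nat.pow_pos (by norm_num)
      exact Nat.le_of_mul_le_mul_right this h2pos
    have hsum : ∑ p ∈ Finset.univ.sigma (fun j : Fin n => Finset.Iio j),
        (badSet N n k p.2 p.1).card ≤
        (Finset.univ.sigma (fun j : Fin n => Finset.Iio j)).card * 2 ^ (N - (n - 1)) := by
      calc ∑ p ∈ Finset.univ.sigma (fun j : Fin n => Finset.Iio j),
          (badSet N n k p.2 p.1).card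
          ≤ ∑ _p ∈ Finset.univ.sigma (fun j : Fin n => Finset.Iio j), 2 ^ (N - (n - 1)) :=
            Finset.sum_le_sum hbadle
        _ = _ := by rw [Finset.sum_const, smul_eq_mul]
    have hsigcard : (Finset.univ.sigma (fun j : Fin n => Finset.Iio j)).card =
        ∑ j : Fin n, (j : ℕ) := by
      rw [Finset.card_sigma]
      congr 1
      funext j
      simp
    have hfinal : 2 ^ N < 2 ^ N := by
      calc 2 ^ N = ((Finset.univ : Finset (Fin N → Fin 2))).card := hcardN.symm
        _ ≤ _ := hle1
        _ ≤ _ := hle2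
        _ ≤ (Finset.univ.sigma (fun j : Fin n => Finset.Iio j)).card * 2 ^ (N - (n - 1)) := hsum
        _ = (∑ j : Fin n, (j : ℕ)) * 2 ^ (N - (n - 1)) := by rw [hsigcard]
        _ < 2 ^ (n - 1) * 2 ^ (N - (n - 1)) := by
            exact Nat.mul_lt_mul_of_pos_right (sum_fin_lt_pow n hn)
              (Nat.pow_pos (by norm_num))
        _ = 2 ^ N := by rw [← pow_add]; congr 1; omega
    omega
  obtain ⟨f, hf⟩ := hex
  refine ⟨extFun N f, ?_⟩
  intro i j hne heq
  rcases lt_or_gt_of_ne hne with hij | hij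
  · obtain ⟨t, ht⟩ := hf i j hij
    exact ht (congrFun heq t)
  · obtain ⟨t, ht⟩ := hf j i hij
    exact ht (congrFun heq t).symm
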